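/- Off-diagonal entries of the product S_ζ·S'_ξ vanish: assume additionally r ≡ 1 (mod 4). Then for all natural numbers i ≠ j with 1 ≤ i, j ≤ (r−1)/2 (viewed in ZMod r), ∑_{k ∈ ZMod r, k ≠ 0} χ(k·j) · s(i·k) · ζ^{2·k·j} = 0. -/

import Mathlib

open Complex Finset

open scoped Classical

/-- For `n ∈ ZMod r`, the complex number `ζ^n = exp(2πi·n̂/r)` where `n̂` is the
canonical lift of `n`. -/
noncomputable def zmodExp (r : ℕ) (n : ZMod r) : ℂ :=
  Complex.exp (2 * Real.pi * Complex.I * (n.val : ℂ) / (r : ℂ))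

/-- The alternating sum `s(m) = ∑_{j=0}^{r} (−1)^j·ζ^{m·Tr(u^j)}`. -/
noncomputable def sSum (r : ℕ) {F : Type*} [Field F] [Fintype F] [Algebra (ZMod r) F]
    (u : F) (m : ZMod r) : ℂ :=
  ∑ j ∈ Finset.range (r + 1), (-1 : ℂ) ^ j * zmodExp r (m * Algebra.trace (ZMod r) F (u ^ j))

/-- The quadratic character of `ZMod r` with values in `ℂ`:
`χ(m) = 1` if `m` is a nonzero square, `−1` if `m` is a nonsquare, `χ(0) = 0`. -/
noncomputable def chiC (r : ℕ) (m : ZMod r) : ℂ :=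
  if m = 0 then 0 else if IsSquare m then 1 else -1

section Helpers

variable {r : ℕ} [Fact r.Prime]

lemma chiC_eq (m : ZMod r) : chiC r m = ((quadraticChar (ZMod r) m : ℤ) : ℂ) := by
  rw [chiC, quadraticChar_apply, quadraticCharFun]
  split_ifs <;> simp

lemma chiC_zero : chiC r (0 : ZMod r) = 0 := by simp [chiC]

lemma chiC_mul (a b : ZMod r) : chiC r (a * b) = chiC r a * chiC r b := by
  simp only [chiC_eq, ← Int.cast_mul, ← map_mul]

lemma chiC_sq (a : ZMod r) (ha : a ≠ 0) : chiC r a * chiC r a = 1 := by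
  simp only [chiC, if_neg ha]
  split_ifs <;> norm_num

lemma chiC_inv (a : ZMod r) : chiC r a⁻¹ = chiC r a := by
  by_cases ha : a = 0
  · simp [ha]
  · have h1 : chiC r a⁻¹ * (chiC r a * chiC r a) = chiC r a⁻¹ := by
      rw [chiC_sq a ha, mul_one]
    have h2 : chiC r a⁻¹ * chiC r a = chiC r 1 := by
      rw [← chiC_mul, inv_mul_cancel₀ ha]
    have h3 : chiC r 1 = 1 := by simp [chiC, IsSquare.one]
    calc chiC r a⁻¹ = chiC r a⁻¹ * chiC r a * chiC r a := by rw [mul_assoc, h1]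
      _ = chiC r a := by rw [h2, h3, one_mul]

lemma chiC_sum (hr2 : r ≠ 2) : ∑ a : ZMod r, chiC r a = 0 := by
  have h := quadraticChar_sum_zero (F := ZMod r)
    (by rw [ZMod.ringChar_zmod_n]; exact hr2)
  have : ∑ a : ZMod r, chiC r a = (((∑ a : ZMod r, quadraticChar (ZMod r) a : ℤ)) : ℂ) := by
    rw [Int.cast_sum]
    exact Finset.sum_congr rfl fun a _ => chiC_eq a
  rw [this, h, Int.cast_zero]

lemma zmodExp_eq_pow [NeZero r] (n : ZMod r) :
    zmodExp r n = Complex.exp (2 * Real.pi * Complex.I / (r : ℂ)) ^ n.val := by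
  rw [← Complex.exp_nat_mul, zmodExp]
  congr 1
  ring

lemma zmodExp_root_pow [NeZero r] :
    Complex.exp (2 * Real.pi * Complex.I / (r : ℂ)) ^ r = 1 := by
  rw [← Complex.exp_nat_mul]
  have hr0 : (r : ℂ) ≠ 0 := Nat.cast_ne_zero.mpr (NeZero.ne r)
  have : (r : ℂ) * (2 * Real.pi * Complex.I / (r : ℂ)) = 2 * Real.pi * Complex.I := by
    field_simp
  rw [this]
  simpa using Complex.exp_int_mul_two_pi_mul_I 1

lemma zmodExp_zero [NeZero r] : zmodExp r (0 : ZMod r) = 1 := by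
  simp [zmodExp, ZMod.val_zero]

lemma zmodExp_add [NeZero r] (a b : ZMod r) :
    zmodExp r (a + b) = zmodExp r a * zmodExp r b := by
  set z := Complex.exp (2 * Real.pi * Complex.I / (r : ℂ)) with hz
  rw [zmodExp_eq_pow, zmodExp_eq_pow, zmodExp_eq_pow, ← pow_add]
  have hv : (a + b).val = (a.val + b.val) % r := ZMod.val_add a b
  have hdm : a.val + b.val = r * ((a.val + b.val) / r) + (a.val + b.val) % r :=
    (Nat.div_add_mod _ r).symm
  calc z ^ (a + b).val = z ^ ((a.val + b.val) % r) := by rw [hv]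
    _ = (z ^ r) ^ ((a.val + b.val) / r) * z ^ ((a.val + b.val) % r) := by
        rw [zmodExp_root_pow, one_pow, one_mul]
    _ = z ^ (a.val + b.val) := by rw [← pow_mul, ← pow_add, ← hdm]

/-- Summing over nonzero elements equals summing over everything when the value at 0 is 0. -/
lemma sum_filter_ne_zero {α : Type*} [Fintype α] [DecidableEq α] [Zero α]
    (g : α → ℂ) (h0 : g 0 = 0) :
    ∑ x ∈ Finset.univ.filter (fun x : α => x ≠ 0), g x = ∑ x, g x := by
  rw [Finset.filter_ne', Finset.sum_erase _ h0]

/-- Counting square roots: `∑ a h(a²) = ∑ s (1 + χ(s)) h(s)`. -/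
lemma sum_sq_eq (hr2 : r ≠ 2) (h : ZMod r → ℂ) :
    ∑ a : ZMod r, h (a ^ 2) = ∑ s : ZMod r, (1 + chiC r s) * h s := by
  have hF : ringChar (ZMod r) ≠ 2 := by rw [ZMod.ringChar_zmod_n]; exact hr2
  rw [← Finset.sum_fiberwise_of_maps_to (g := fun a : ZMod r => a ^ 2)
    (fun a _ => Finset.mem_univ (a ^ 2)) (fun a => h (a ^ 2))]
  refine Finset.sum_congr rfl fun s _ => ?_
  have h1 : ∀ a ∈ Finset.univ.filter (fun a : ZMod r => a ^ 2 = s), h (a ^ 2) = h s := by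
    intro a ha
    rw [(Finset.mem_filter.mp ha).2]
  rw [Finset.sum_congr rfl h1, Finset.sum_const, nsmul_eq_mul]
  congr 1
  have h2 := quadraticChar_card_sqrts hF s
  have h3 : {x : ZMod r | x ^ 2 = s}.toFinset = Finset.univ.filter (fun a : ZMod r => a ^ 2 = s) := by
    ext x; simp
  rw [h3] at h2
  have : ((Finset.univ.filter (fun a : ZMod r => a ^ 2 = s)).card : ℂ)
      = (((quadraticChar (ZMod r) s + 1 : ℤ)) : ℂ) := by
    rw [← h2]; push_cast; ring
  rw [this, chiC_eq]
  push_cast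
  ring

lemma sum_affine (hr2 : r ≠ 2) {c : ZMod r} (hc : c ≠ 0) (d0 : ZMod r) :
    ∑ s : ZMod r, chiC r (c * s + d0) = 0 := by
  have hbij : Function.Bijective (fun s : ZMod r => c * s + d0) := by
    constructor
    · intro x y hxy
      simp only at hxy
      have := add_right_cancel hxy
      exact mul_left_cancel₀ hc this
    · intro w
      exact ⟨c⁻¹ * (w - d0), by field_simp; ring⟩
  rw [Fintype.sum_bijective _ hbij _ (fun w => chiC r w) (fun s => rfl)]
  exact chiC_sum hr2

lemma quadform_sum (hr2 : r ≠ 2) {A B : ZMod r} (hA : A ≠ 0) (hB : B ≠ 0) :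
    ∑ a : ZMod r, ∑ b : ZMod r, chiC r (A * a ^ 2 + B * b ^ 2) = 0 := by
  have step1 : ∀ a : ZMod r, ∑ b : ZMod r, chiC r (A * a ^ 2 + B * b ^ 2)
      = ∑ t : ZMod r, (1 + chiC r t) * chiC r (A * a ^ 2 + B * t) := fun a =>
    sum_sq_eq hr2 (fun t => chiC r (A * a ^ 2 + B * t))
  simp only [step1]
  rw [Finset.sum_comm]
  have step2 : ∀ t : ZMod r, ∑ a : ZMod r, (1 + chiC r t) * chiC r (A * a ^ 2 + B * t)
      = ∑ s : ZMod r, (1 + chiC r s) * ((1 + chiC r t) * chiC r (A * s + B * t)) := fun t =>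
    sum_sq_eq hr2 (fun s => (1 + chiC r t) * chiC r (A * s + B * t))
  simp only [step2]
  have expand : ∀ t s : ZMod r, (1 + chiC r s) * ((1 + chiC r t) * chiC r (A * s + B * t))
      = chiC r (A * s + B * t) + chiC r s * chiC r (A * s + B * t)
        + chiC r t * chiC r (A * s + B * t)
        + chiC r s * chiC r t * chiC r (A * s + B * t) := by
    intro t s; ring
  simp only [expand]
  simp only [Finset.sum_add_distrib]
  have hD1 : ∑ t : ZMod r, ∑ s : ZMod r, chiC r (A * s + B * t) = 0 := by
    refine Finset.sum_eq_zero fun t _ => ?_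
    exact sum_affine hr2 hA (B * t)
  have hD2 : ∑ t : ZMod r, ∑ s : ZMod r, chiC r s * chiC r (A * s + B * t) = 0 := by
    rw [Finset.sum_comm]
    refine Finset.sum_eq_zero fun s _ => ?_
    rw [← Finset.mul_sum]
    have : ∑ t : ZMod r, chiC r (A * s + B * t) = 0 := by
      have := sum_affine hr2 hB (A * s)
      calc ∑ t : ZMod r, chiC r (A * s + B * t) = ∑ t : ZMod r, chiC r (B * t + A * s) := by
            refine Finset.sum_congr rfl fun t _ => ?_; ring_nf
        _ = 0 := this
    rw [this, mul_zero]
  have hD3 : ∑ t : ZMod r, ∑ s : ZMod r, chiC r t * chiC r (A * s + B * t) = 0 := by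
    refine Finset.sum_eq_zero fun t _ => ?_
    rw [← Finset.mul_sum, sum_affine hr2 hA (B * t), mul_zero]
  have hD4 : ∑ t : ZMod r, ∑ s : ZMod r, chiC r s * chiC r t * chiC r (A * s + B * t) = 0 := by
    rw [Finset.sum_comm]
    have hrow : ∀ s : ZMod r,
        ∑ t : ZMod r, chiC r s * chiC r t * chiC r (A * s + B * t)
          = chiC r s * ∑ v : ZMod r, chiC r v * chiC r (A + B * v) := by
      intro s
      by_cases hs : s = 0
      · subst hs
        simp [chiC_zero]
      · have hbij : Function.Bijective (fun v : ZMod r => s * v) := by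
          constructor
          · intro x y hxy; exact mul_left_cancel₀ hs hxy
          · intro w; exact ⟨s⁻¹ * w, by field_simp⟩
        have hre := Fintype.sum_bijective _ hbij
          (fun v => chiC r s * chiC r (s * v) * chiC r (A * s + B * (s * v)))
          (fun t => chiC r s * chiC r t * chiC r (A * s + B * t)) (fun v => rfl)
        rw [← hre]
        rw [Finset.mul_sum]
        refine Finset.sum_congr rfl fun v _ => ?_
        show chiC r s * chiC r (s * v) * chiC r (A * s + B * (s * v))
          = chiC r s * (chiC r v * chiC r (A + B * v))
        have h1 : chiC r (s * v) = chiC r s * chiC r v := chiC_mul s v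
        have h2 : chiC r (A * s + B * (s * v)) = chiC r s * chiC r (A + B * v) := by
          rw [show A * s + B * (s * v) = s * (A + B * v) by ring, chiC_mul]
        rw [h1, h2]
        have h3 := chiC_sq s hs
        calc chiC r s * (chiC r s * chiC r v) * (chiC r s * chiC r (A + B * v))
            = (chiC r s * chiC r s) * (chiC r s * (chiC r v * chiC r (A + B * v))) := by ring
          _ = chiC r s * (chiC r v * chiC r (A + B * v)) := by rw [h3]; ring
    simp only [hrow]
    rw [← Finset.sum_mul, chiC_sum hr2, zero_mul]
  rw [hD1, hD2, hD3, hD4]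
  ring

end Helpers

/-- Off-diagonal entries of `S_ζ·S'_ξ` vanish: for `r ≡ 1 (mod 4)` and
`1 ≤ i, j ≤ (r−1)/2` with `i ≠ j`, `∑_{k≠0} χ(kj)·s(ik)·ζ^{2kj} = 0`. -/
theorem stmt17 (r : ℕ) [NeZero r] (hr : r.Prime) (hodd : Odd r) (h3 : r % 3 = 2)
    (h4 : r % 4 = 1)
    (F : Type*) [Field F] [Fintype F] [Algebra (ZMod r) F]
    (hcard : Fintype.card F = r ^ 2)
    (u : F) (hu : orderOf u = r + 1)
    (i j : ℕ) (hij : i ≠ j) (hi1 : 1 ≤ i) (hi2 : i ≤ (r - 1) / 2)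
    (hj1 : 1 ≤ j) (hj2 : j ≤ (r - 1) / 2) :
    ∑ k ∈ Finset.univ.filter (fun k : ZMod r => k ≠ 0),
        chiC r (k * (j : ZMod r)) * sSum r u ((i : ZMod r) * k) *
          zmodExp r (2 * k * (j : ZMod r)) = 0 := by
  haveI hFact : Fact r.Prime := ⟨hr⟩
  obtain ⟨m, hm⟩ := hodd
  have hr2 : r ≠ 2 := by omega
  have hr3 : 3 ≤ r := by have := hr.two_le; omega
  have hm1 : 1 ≤ m := by omega
  have hrchar : ringChar (ZMod r) ≠ 2 := by rw [ZMod.ringChar_zmod_n]; exact hr2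
  have h2z : (2 : ZMod r) ≠ 0 := by
    have h2 : ((2 : ℕ) : ZMod r) ≠ 0 := by
      rw [Ne, ZMod.natCast_eq_zero_iff]
      intro hdvd
      have := Nat.le_of_dvd (by norm_num) hdvd
      omega
    simpa using h2
  set iz := (i : ZMod r) with hizdef
  set jz := (j : ZMod r) with hjzdef
  have hir : i < r := by omega
  have hjr : j < r := by omega
  have hizjz : iz + jz ≠ 0 := by
    have h2 : ((i + j : ℕ) : ZMod r) ≠ 0 := by
      rw [Ne, ZMod.natCast_eq_zero_iff]
      intro hdvd
      have := Nat.le_of_dvd (by omega) hdvd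
      omega
    rw [hizdef, hjzdef]
    push_cast at h2 ⊢
    exact h2
  have hsub : iz - jz ≠ 0 := by
    intro h
    apply hij
    have h2 : iz = jz := by rwa [sub_eq_zero] at h
    have h3 := congrArg ZMod.val h2
    rwa [hizdef, hjzdef, ZMod.val_natCast_of_lt hir, ZMod.val_natCast_of_lt hjr] at h3
  -- characteristic facts about F
  have halg : Function.Injective (algebraMap (ZMod r) F) := (algebraMap (ZMod r) F).injective
  haveI : CharP F r := charP_of_injective_algebraMap halg r
  have hy2 : ∀ y : F, y ≠ 0 → y ^ (r ^ 2 - 1) = 1 := by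
    intro y hy
    have := FiniteField.pow_card_sub_one_eq_one y hy
    rwa [hcard] at this
  -- a nonsquare d
  obtain ⟨d, hd⟩ := FiniteField.exists_nonsquare (F := ZMod r) hrchar
  have hd0 : d ≠ 0 := by rintro rfl; exact hd ⟨0, by ring⟩
  have hm2 : r / 2 = m := by omega
  have hdm : d ^ m = -1 := by
    have h1 : d ^ m ≠ 1 := by
      rw [← hm2]
      exact fun h => hd ((ZMod.euler_criterion r hd0).mpr h)
    have h2 : d ^ m * d ^ m = 1 := by
      rw [← pow_add]
      have he : m + m = r - 1 := by omega
      rw [he]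
      exact ZMod.pow_card_sub_one_eq_one hd0
    rcases mul_self_eq_one_iff.mp h2 with h | h
    · exact absurd h h1
    · exact h
  -- a square root θ of d in F
  have hringF : ringChar F ≠ 2 := by
    have : ringChar F = r := ringChar.eq F r
    rw [this]; exact hr2
  have hsqF : IsSquare (algebraMap (ZMod r) F d) := by
    have hd0F : algebraMap (ZMod r) F d ≠ 0 := by
      intro h
      exact hd0 (halg (by rwa [map_zero]))
    rw [FiniteField.isSquare_iff hringF hd0F, hcard]
    have hdiv : r ^ 2 / 2 = m * (r + 1) := by
      have h1 : r ^ 2 = 1 + 2 * (m * (r + 1)) := by rw [hm]; ring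
      rw [h1, Nat.add_mul_div_left _ _ (by norm_num : 0 < 2)]
      norm_num
    rw [hdiv, ← map_pow, pow_mul, hdm]
    have : ((-1 : ZMod r)) ^ (r + 1) = 1 := Even.neg_one_pow ⟨m + 1, by omega⟩
    rw [this, map_one]
  obtain ⟨θ, hθ⟩ := hsqF
  -- linear independence workhorse
  have hli : ∀ s t : ZMod r,
      algebraMap (ZMod r) F s + algebraMap (ZMod r) F t * θ = 0 → s = 0 ∧ t = 0 := by
    intro s t h
    by_cases ht : t = 0
    · subst ht
      rw [map_zero, zero_mul, add_zero] at h
      exact ⟨halg (by rwa [map_zero]), rfl⟩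
    · exfalso
      apply hd
      have htF : algebraMap (ZMod r) F t ≠ 0 := by
        intro hc; exact ht (halg (by rwa [map_zero]))
      have ht2 : algebraMap (ZMod r) F t * θ = -algebraMap (ZMod r) F s :=
        eq_neg_of_add_eq_zero_right h
      have hsq2 : d * t ^ 2 = s ^ 2 := by
        apply halg
        rw [map_mul, map_pow, map_pow, hθ]
        calc θ * θ * algebraMap (ZMod r) F t ^ 2
            = (algebraMap (ZMod r) F t * θ) * (algebraMap (ZMod r) F t * θ) := by ring
          _ = (-algebraMap (ZMod r) F s) * (-algebraMap (ZMod r) F s) := by rw [ht2]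
          _ = algebraMap (ZMod r) F s ^ 2 := by ring
      refine ⟨s / t, ?_⟩
      field_simp
      linear_combination hsq2
  -- the parametrization E
  set E : ZMod r → ZMod r → F :=
    fun a c => algebraMap (ZMod r) F a + algebraMap (ZMod r) F c * θ with hE
  have hEmul : ∀ a c a' c', E a c * E a' c' = E (a * a' + d * (c * c')) (a * c' + c * a') := by
    intro a c a' c'
    simp only [hE, map_add, map_mul]
    linear_combination (-(algebraMap (ZMod r) F c * algebraMap (ZMod r) F c')) * hθ
  have hEzero : ∀ a c, E a c = 0 ↔ a = 0 ∧ c = 0 := by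
    intro a c
    constructor
    · intro h; exact hli a c h
    · rintro ⟨rfl, rfl⟩; simp [hE]
  have hθr : θ ^ r = -θ := by
    have h1 : θ ^ 2 = algebraMap (ZMod r) F d := by rw [sq]; exact hθ.symm
    rw [hm, pow_succ, pow_mul, h1, ← map_pow, hdm, map_neg, map_one]
    ring
  have hfrob : ∀ a c : ZMod r, (E a c) ^ r = E a (-c) := by
    intro a c
    simp only [hE]
    rw [add_pow_char, mul_pow, ← map_pow, ← map_pow, ZMod.pow_card, ZMod.pow_card, hθr,
      map_neg]
    ring
  have hnorm : ∀ a c : ZMod r, E a c * (E a c) ^ r = algebraMap (ZMod r) F (a ^ 2 - d * c ^ 2) := by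
    intro a c
    rw [hfrob, hEmul]
    have e1 : a * a + d * (c * -c) = a ^ 2 - d * c ^ 2 := by ring
    have e2 : a * -c + c * a = 0 := by ring
    rw [e1, e2]
    simp [hE]
  -- basis and trace
  have hfinrank : Module.finrank (ZMod r) F = 2 := by
    have hcard2 := Module.card_eq_pow_finrank (K := ZMod r) (V := F)
    rw [ZMod.card, hcard] at hcard2
    exact (Nat.pow_right_injective hr.two_le hcard2.symm)
  have hli' : LinearIndependent (ZMod r) ![1, θ] := by
    rw [LinearIndependent.pair_iff]
    intro s t hst
    apply hli s t
    rw [Algebra.smul_def, Algebra.smul_def, mul_one] at hst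
    exact hst
  obtain ⟨bE, hbE⟩ : ∃ b : Module.Basis (Fin 2) (ZMod r) F, ⇑b = ![1, θ] :=
    ⟨basisOfLinearIndependentOfCardEqFinrank hli' (by simp [hfinrank]),
     coe_basisOfLinearIndependentOfCardEqFinrank _ _⟩
  have hb0 : bE 0 = 1 := by rw [hbE]; rfl
  have hb1 : bE 1 = θ := by rw [hbE]; rfl
  have htr : ∀ a c : ZMod r, Algebra.trace (ZMod r) F (E a c) = 2 * a := by
    intro a c
    rw [Algebra.trace_eq_matrix_trace bE, Matrix.trace_fin_two]
    have hrepr : ∀ p q : ZMod r, bE.repr (E p q) = Finsupp.single 0 p + Finsupp.single 1 q := by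
      intro p q
      have hpq : E p q = p • bE 0 + q • bE 1 := by
        rw [hb0, hb1]
        simp [hE, Algebra.smul_def]
      rw [hpq, map_add, map_smul, map_smul, bE.repr_self, bE.repr_self]
      simp [Finsupp.smul_single]
    have hEθ : E a c * θ = E (d * c) a := by
      simp only [hE, map_mul]
      linear_combination (-(algebraMap (ZMod r) F c)) * hθ
    rw [Algebra.leftMulMatrix_eq_repr_mul, Algebra.leftMulMatrix_eq_repr_mul,
      hb0, hb1, mul_one, hEθ, hrepr, hrepr]
    simp [Finsupp.single_apply]
    ring
  -- Euler criterion bridging lemma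
  have hlam : ∀ n : ZMod r, n ≠ 0 →
      (if n ^ m = (1 : ZMod r) then (1 : ℂ) else -1) = chiC r n := by
    intro n hn
    rw [chiC, if_neg hn]
    by_cases h : IsSquare n
    · rw [if_pos h, if_pos]
      have := (ZMod.euler_criterion r hn).mp h
      rwa [hm2] at this
    · rw [if_neg h, if_neg]
      intro hc
      apply h
      apply (ZMod.euler_criterion r hn).mpr
      rwa [hm2]
  -- the target function and circle finset
  set f : F → ℂ := fun x => (if x ^ (m + 1) = 1 then (1 : ℂ) else -1) *
    chiC r (iz * Algebra.trace (ZMod r) F x + 2 * jz) with hf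
  set S : Finset F := Finset.univ.filter (fun x : F => x ^ (r + 1) = 1) with hS
  set T : ℂ := ∑ x ∈ S, f x with hT
  -- facts about u
  have hu1 : u ^ (r + 1) = 1 := by rw [← hu]; exact pow_orderOf_eq_one u
  have hu0 : u ≠ 0 := by
    rintro rfl
    rw [zero_pow (by omega : r + 1 ≠ 0)] at hu1
    exact zero_ne_one hu1
  have hum : u ^ (m + 1) = -1 := by
    have h2 : u ^ (m + 1) * u ^ (m + 1) = 1 := by
      rw [← pow_add]
      have he : m + 1 + (m + 1) = r + 1 := by omega
      rw [he, hu1]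
    rcases mul_self_eq_one_iff.mp h2 with h | h
    · exfalso
      have hdvd : orderOf u ∣ m + 1 := orderOf_dvd_of_pow_eq_one h
      rw [hu] at hdvd
      have := Nat.le_of_dvd (by omega) hdvd
      omega
    · exact h
  have h2F : (2 : F) ≠ 0 := by
    have h := (map_ne_zero_iff (algebraMap (ZMod r) F) halg).mpr h2z
    rwa [map_ofNat] at h
  have hneg1F : (-1 : F) ≠ 1 := by
    intro hc
    apply h2F
    linear_combination -hc
  have hneg : ∀ jj : ℕ, (-1 : ℂ) ^ jj = (if (u ^ jj) ^ (m + 1) = 1 then (1 : ℂ) else -1) := by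
    intro jj
    have hswap : (u ^ jj) ^ (m + 1) = (-1 : F) ^ jj := by
      rw [← pow_mul, mul_comm, pow_mul, hum]
    rcases Nat.even_or_odd jj with he | ho
    · rw [he.neg_one_pow, if_pos]
      rw [hswap, he.neg_one_pow]
    · rw [ho.neg_one_pow, if_neg]
      rw [hswap, ho.neg_one_pow]
      exact hneg1F
  -- injectivity of powers of u
  have hinj : ∀ j1 ∈ Finset.range (r + 1), ∀ j2 ∈ Finset.range (r + 1),
      u ^ j1 = u ^ j2 → j1 = j2 := by
    have key : ∀ j1 j2, j1 ≤ j2 → j2 < r + 1 → u ^ j1 = u ^ j2 → j1 = j2 := by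
      intro j1 j2 hle hlt heq
      have h1 : u ^ j1 * u ^ (j2 - j1) = u ^ j1 * 1 := by
        rw [mul_one, ← pow_add]
        have he : j1 + (j2 - j1) = j2 := by omega
        rw [he]
        exact heq.symm
      have h2 : u ^ (j2 - j1) = 1 := mul_left_cancel₀ (pow_ne_zero _ hu0) h1
      have h3 : orderOf u ∣ j2 - j1 := orderOf_dvd_of_pow_eq_one h2
      rw [hu] at h3
      rcases Nat.eq_zero_or_pos (j2 - j1) with h | h
      · omega
      · have := Nat.le_of_dvd h h3
        omega
    intro j1 h1 j2 h2 heq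
    rw [Finset.mem_range] at h1 h2
    rcases le_total j1 j2 with h | h
    · exact key j1 j2 h h2 heq
    · exact (key j2 j1 h h1 heq.symm).symm
  -- S has at most r + 1 elements
  have hScard : S.card ≤ r + 1 := by
    have hsub : S ⊆ (Polynomial.nthRoots (r + 1) (1 : F)).toFinset := by
      intro x hx
      rw [Multiset.mem_toFinset, Polynomial.mem_nthRoots (by omega : 0 < r + 1)]
      exact (Finset.mem_filter.mp hx).2
    calc S.card ≤ (Polynomial.nthRoots (r + 1) (1 : F)).toFinset.card :=
          Finset.card_le_card hsub
      _ ≤ Multiset.card (Polynomial.nthRoots (r + 1) (1 : F)) := Multiset.toFinset_card_le _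
      _ ≤ r + 1 := Polynomial.card_nthRoots _ _
  -- the image of powers of u is S
  have himage : (Finset.range (r + 1)).image (fun jj => u ^ jj) = S := by
    apply Finset.eq_of_subset_of_card_le
    · intro x hx
      obtain ⟨jj, hjj, rfl⟩ := Finset.mem_image.mp hx
      rw [hS, Finset.mem_filter]
      refine ⟨Finset.mem_univ _, ?_⟩
      rw [← pow_mul, mul_comm, pow_mul, hu1, one_pow]
    · rw [Finset.card_image_of_injOn (fun a ha b hb => hinj a ha b hb), Finset.card_range]
      exact hScard
  have claim1 : ∑ jj ∈ Finset.range (r + 1),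
      (-1 : ℂ) ^ jj * chiC r (iz * Algebra.trace (ZMod r) F (u ^ jj) + 2 * jz) = T := by
    rw [hT, ← himage, Finset.sum_image (fun a ha b hb => hinj a ha b hb)]
    refine Finset.sum_congr rfl fun jj _ => ?_
    rw [hf]
    simp only
    rw [hneg jj]
  -- arithmetic identities
  set N := r * (r - 1) with hN
  have harith1 : N + (r - 1) = r ^ 2 - 1 := by
    rw [hN]
    have e1 : r - 1 = 2 * m := by omega
    rw [e1, hm]
    symm
    exact Nat.sub_eq_of_eq_add (by ring)
  have harith4 : (r + 1) * (r - 1) = r ^ 2 - 1 := by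
    have e1 : r - 1 = 2 * m := by omega
    rw [e1, hm]
    symm
    exact Nat.sub_eq_of_eq_add (by ring)
  have hgcd : Nat.gcd N (r ^ 2 - 1) = r - 1 := by
    rw [hN, ← harith4, Nat.gcd_mul_right]
    have hco : Nat.gcd r (r + 1) = 1 := by
      have he : r + 1 = 1 + r := by omega
      rw [he, Nat.gcd_add_self_right, Nat.gcd_one_right]
    rw [hco, one_mul]
  have hker : ∀ z : F, z ≠ 0 → z ^ N = 1 → z ^ (r - 1) = 1 := by
    intro z hz h1
    have hd1 : orderOf z ∣ N := orderOf_dvd_of_pow_eq_one h1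
    have hd2 : orderOf z ∣ r ^ 2 - 1 := orderOf_dvd_of_pow_eq_one (hy2 z hz)
    have hd3 : orderOf z ∣ r - 1 := hgcd ▸ Nat.dvd_gcd hd1 hd2
    exact orderOf_dvd_iff_pow_eq_one.mp hd3
  have hkercard : (Finset.univ.filter (fun z : F => z ^ (r - 1) = 1)).card ≤ r - 1 := by
    have hsub : Finset.univ.filter (fun z : F => z ^ (r - 1) = 1)
        ⊆ (Polynomial.nthRoots (r - 1) (1 : F)).toFinset := by
      intro x hx
      rw [Multiset.mem_toFinset, Polynomial.mem_nthRoots (by omega : 0 < r - 1)]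
      exact (Finset.mem_filter.mp hx).2
    calc (Finset.univ.filter (fun z : F => z ^ (r - 1) = 1)).card
        ≤ (Polynomial.nthRoots (r - 1) (1 : F)).toFinset.card := Finset.card_le_card hsub
      _ ≤ Multiset.card (Polynomial.nthRoots (r - 1) (1 : F)) := Multiset.toFinset_card_le _
      _ ≤ r - 1 := Polynomial.card_nthRoots _ _
  have hSne0 : ∀ x ∈ S, x ≠ 0 := by
    intro x hx h0
    have hmem := (Finset.mem_filter.mp hx).2
    rw [h0, zero_pow (by omega : r + 1 ≠ 0)] at hmem
    exact zero_ne_one hmem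
  have hmaps : ∀ y ∈ Finset.univ.filter (fun y : F => y ≠ 0), y ^ N ∈ S := by
    intro y hy
    have hy0 : y ≠ 0 := (Finset.mem_filter.mp hy).2
    rw [hS, Finset.mem_filter]
    refine ⟨Finset.mem_univ _, ?_⟩
    have harithN : N * (r + 1) = (N + (r - 1)) * r := by
      rw [hN]
      have e1 : r - 1 = 2 * m := by omega
      rw [e1, hm]; ring
    rw [← pow_mul, harithN, pow_mul, harith1, hy2 y hy0, one_pow]
  have hcard_ne : (Finset.univ.filter (fun y : F => y ≠ 0)).card = r ^ 2 - 1 := by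
    rw [Finset.filter_ne', Finset.card_erase_of_mem (Finset.mem_univ 0), Finset.card_univ, hcard]
  have hcount := Finset.card_eq_sum_card_fiberwise hmaps
  have hfib_le : ∀ x ∈ S,
      ((Finset.univ.filter (fun y : F => y ≠ 0)).filter (fun y => y ^ N = x)).card ≤ r - 1 := by
    intro x hx
    rcases Finset.eq_empty_or_nonempty
      ((Finset.univ.filter (fun y : F => y ≠ 0)).filter (fun y => y ^ N = x)) with he | hne
    · rw [he, Finset.card_empty]; omega
    · obtain ⟨y₀, hy₀⟩ := hne
      have hy₀0 : y₀ ≠ 0 := (Finset.mem_filter.mp (Finset.mem_filter.mp hy₀).1).2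
      have hy₀N : y₀ ^ N = x := (Finset.mem_filter.mp hy₀).2
      have hx0 : x ≠ 0 := hSne0 x hx
      refine le_trans (Finset.card_le_card_of_injOn (fun y => y * y₀⁻¹) ?_ ?_) hkercard
      · intro y hy
        have hyy0 : y ≠ 0 := (Finset.mem_filter.mp (Finset.mem_filter.mp hy).1).2
        have hyN : y ^ N = x := (Finset.mem_filter.mp hy).2
        rw [Finset.mem_coe, Finset.mem_filter]
        refine ⟨Finset.mem_univ _, ?_⟩
        apply hker
        · exact mul_ne_zero hyy0 (inv_ne_zero hy₀0)
        · rw [mul_pow, inv_pow, hyN, hy₀N, mul_inv_cancel₀ hx0]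
      · intro a _ b _ hab
        exact mul_right_cancel₀ (inv_ne_zero hy₀0) hab
  have hfib : ∀ x ∈ S,
      ((Finset.univ.filter (fun y : F => y ≠ 0)).filter (fun y => y ^ N = x)).card = r - 1 := by
    by_contra hcon
    push_neg at hcon
    obtain ⟨x₀, hx₀S, hx₀⟩ := hcon
    have hlt : ((Finset.univ.filter (fun y : F => y ≠ 0)).filter
        (fun y => y ^ N = x₀)).card < r - 1 := lt_of_le_of_ne (hfib_le x₀ hx₀S) hx₀
    have hsumlt : ∑ x ∈ S,
        ((Finset.univ.filter (fun y : F => y ≠ 0)).filter (fun y => y ^ N = x)).card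
        < ∑ _x ∈ S, (r - 1) :=
      Finset.sum_lt_sum (fun x hx => hfib_le x hx) ⟨x₀, hx₀S, hlt⟩
    rw [Finset.sum_const, smul_eq_mul] at hsumlt
    rw [← hcount, hcard_ne] at hsumlt
    have hle2 : S.card * (r - 1) ≤ (r + 1) * (r - 1) := Nat.mul_le_mul_right _ hScard
    rw [harith4] at hle2
    omega
  have claim3 : ∑ y ∈ Finset.univ.filter (fun y : F => y ≠ 0), f (y ^ N)
      = ((r - 1 : ℕ) : ℂ) * T := by
    rw [← Finset.sum_fiberwise_of_maps_to hmaps (fun y => f (y ^ N))]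
    rw [hT, Finset.mul_sum]
    refine Finset.sum_congr rfl fun x hx => ?_
    have hcongr : ∀ y ∈ (Finset.univ.filter (fun y : F => y ≠ 0)).filter (fun y => y ^ N = x),
        f (y ^ N) = f x := by
      intro y hy
      rw [(Finset.mem_filter.mp hy).2]
    rw [Finset.sum_congr rfl hcongr, Finset.sum_const, hfib x hx, nsmul_eq_mul]
  -- the key pointwise identity
  set A : ZMod r := 2 * (iz + jz) with hA
  set B : ZMod r := 2 * (iz - jz) * d with hB
  have key_pointwise : ∀ a c : ZMod r, E a c ≠ 0 →
      f ((E a c) ^ N) = chiC r (A * a ^ 2 + B * c ^ 2) := by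
    intro a c hy
    set n : ZMod r := a ^ 2 - d * c ^ 2 with hn
    have hn0 : n ≠ 0 := by
      intro h
      have h1 : E a c * (E a c) ^ r = 0 := by rw [hnorm a c, ← hn, h, map_zero]
      rcases mul_eq_zero.mp h1 with h' | h'
      · exact hy h'
      · exact hy (pow_eq_zero_iff (by omega : r ≠ 0) |>.mp h')
    have hyr1 : (E a c) ^ (r + 1) = algebraMap (ZMod r) F n := by
      rw [pow_succ, pow_mul_comm', hnorm, ← hn]
    have harithL : N * (m + 1) = (r + 1) * (r * m) := by
      rw [hN]
      have e1 : r - 1 = 2 * m := by omega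
      rw [e1, hm]; ring
    have hxlam : ((E a c) ^ N) ^ (m + 1) = algebraMap (ZMod r) F (n ^ m) := by
      rw [← pow_mul, harithL, pow_mul, hyr1, ← map_pow]
      congr 1
      rw [pow_mul, ZMod.pow_card]
    have h1 : (E a c) ^ N * (E a c) ^ (r - 1) = 1 := by
      rw [← pow_add, harith1]; exact hy2 _ hy
    have h2 : (E a c) ^ (r - 1) * (E a c) ^ 2 = (E a c) ^ (r + 1) := by
      rw [← pow_add]; congr 1; omega
    have hnF0 : algebraMap (ZMod r) F n ≠ 0 := by
      rw [map_ne_zero_iff _ halg]; exact hn0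
    have hx_eq : (E a c) ^ N * algebraMap (ZMod r) F n = (E a c) ^ 2 := by
      calc (E a c) ^ N * algebraMap (ZMod r) F n = (E a c) ^ N * (E a c) ^ (r + 1) := by
            rw [hyr1]
        _ = (E a c) ^ N * ((E a c) ^ (r - 1) * (E a c) ^ 2) := by rw [h2]
        _ = ((E a c) ^ N * (E a c) ^ (r - 1)) * (E a c) ^ 2 := by ring
        _ = (E a c) ^ 2 := by rw [h1, one_mul]
    have hy2E : (E a c) ^ 2 = E (a ^ 2 + d * c ^ 2) (2 * (a * c)) := by
      rw [sq, hEmul]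
      have ea : a * a + d * (c * c) = a ^ 2 + d * c ^ 2 := by ring
      have ec : a * c + c * a = 2 * (a * c) := by ring
      rw [ea, ec]
    have hscale : ∀ w p q : ZMod r,
        algebraMap (ZMod r) F w * E p q = E (w * p) (w * q) := by
      intro w p q; simp only [hE, map_add, map_mul]; ring
    have hxval : (E a c) ^ N = E (n⁻¹ * (a ^ 2 + d * c ^ 2)) (n⁻¹ * (2 * (a * c))) := by
      have hstep := eq_div_of_mul_eq hnF0 hx_eq
      rw [div_eq_mul_inv, ← map_inv₀, mul_comm] at hstep
      rw [hstep, hy2E, hscale]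
    show (if ((E a c) ^ N) ^ (m + 1) = 1 then (1 : ℂ) else -1) *
      chiC r (iz * Algebra.trace (ZMod r) F ((E a c) ^ N) + 2 * jz) = _
    have hfirst : (if ((E a c) ^ N) ^ (m + 1) = 1 then (1 : ℂ) else -1) = chiC r n := by
      rw [← hlam n hn0]
      by_cases hcase : n ^ m = 1
      · rw [if_pos hcase, if_pos (by rw [hxlam, hcase, map_one])]
      · rw [if_neg hcase, if_neg]
        intro hcon
        rw [hxlam] at hcon
        exact hcase (halg (by rw [hcon, map_one]))
    rw [hfirst, hxval, htr]
    have harg : iz * (2 * (n⁻¹ * (a ^ 2 + d * c ^ 2))) + 2 * jz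
        = n⁻¹ * (2 * iz * (a ^ 2 + d * c ^ 2) + 2 * jz * n) := by
      field_simp
    rw [harg, chiC_mul, chiC_inv]
    have hw : 2 * iz * (a ^ 2 + d * c ^ 2) + 2 * jz * n = A * a ^ 2 + B * c ^ 2 := by
      rw [hn, hA, hB]; ring
    rw [hw]
    calc chiC r n * (chiC r n * chiC r (A * a ^ 2 + B * c ^ 2))
        = (chiC r n * chiC r n) * chiC r (A * a ^ 2 + B * c ^ 2) := by ring
      _ = chiC r (A * a ^ 2 + B * c ^ 2) := by rw [chiC_sq n hn0, one_mul]
  -- the parametrization is bijective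
  have hbijE : Function.Bijective (fun p : ZMod r × ZMod r => E p.1 p.2) := by
    constructor
    · intro p q hpq
      have h0 : E (p.1 - q.1) (p.2 - q.2) = 0 := by
        simp only [hE, map_sub] at hpq ⊢
        linear_combination hpq
      obtain ⟨h1, h2⟩ := (hEzero _ _).mp h0
      have e1 : p.1 = q.1 := by rwa [sub_eq_zero] at h1
      have e2 : p.2 = q.2 := by rwa [sub_eq_zero] at h2
      exact Prod.ext e1 e2
    · intro y
      refine ⟨(bE.repr y 0, bE.repr y 1), ?_⟩
      have hrepr := bE.sum_repr y
      rw [Fin.sum_univ_two, hb0, hb1] at hrepr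
      show E (bE.repr y 0) (bE.repr y 1) = y
      conv_rhs => rw [← hrepr]
      simp only [hE]
      simp [Algebra.smul_def]
  have claim4 : ∑ y ∈ Finset.univ.filter (fun y : F => y ≠ 0), f (y ^ N)
      = ∑ p : ZMod r × ZMod r, chiC r (A * p.1 ^ 2 + B * p.2 ^ 2) := by
    rw [Finset.sum_filter]
    rw [← Fintype.sum_bijective (fun p : ZMod r × ZMod r => E p.1 p.2) hbijE
      (fun p => if E p.1 p.2 ≠ 0 then f ((E p.1 p.2) ^ N) else 0)
      (fun y => if y ≠ 0 then f (y ^ N) else 0) (fun p => rfl)]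
    refine Fintype.sum_congr _ _ fun p => ?_
    by_cases h0 : E p.1 p.2 = 0
    · rw [if_neg (by simpa using h0)]
      obtain ⟨h1, h2⟩ := (hEzero _ _).mp h0
      rw [h1, h2]
      norm_num [chiC_zero]
    · rw [if_pos h0, key_pointwise p.1 p.2 h0]
  have hA0 : A ≠ 0 := mul_ne_zero h2z hizjz
  have hB0 : B ≠ 0 := mul_ne_zero (mul_ne_zero h2z hsub) hd0
  have claim5 : ∑ p : ZMod r × ZMod r, chiC r (A * p.1 ^ 2 + B * p.2 ^ 2) = 0 := by
    rw [Fintype.sum_prod_type]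
    exact quadform_sum hr2 hA0 hB0
  have hT0 : T = 0 := by
    have h1 : ((r - 1 : ℕ) : ℂ) * T = 0 := by rw [← claim3, claim4, claim5]
    rcases mul_eq_zero.mp h1 with h | h
    · exfalso
      have hne : r - 1 ≠ 0 := by omega
      exact hne (Nat.cast_eq_zero.mp h)
    · exact h
  -- Gauss sum reduction of the main sum
  set G : ℂ := ∑ k ∈ Finset.univ.filter (fun k : ZMod r => k ≠ 0),
    chiC r k * zmodExp r k with hG
  have hkey : ∀ c : ZMod r,
      ∑ k ∈ Finset.univ.filter (fun k : ZMod r => k ≠ 0),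
        chiC r (k * jz) * zmodExp r (k * c) = chiC r jz * chiC r c * G := by
    intro c
    by_cases hc : c = 0
    · subst hc
      rw [chiC_zero, mul_zero, zero_mul]
      have hz : ∀ k : ZMod r, chiC r (k * jz) * zmodExp r (k * 0) = chiC r k * chiC r jz := by
        intro k
        rw [mul_zero, zmodExp_zero, mul_one, chiC_mul]
      rw [Finset.sum_congr rfl (fun k _ => hz k), ← Finset.sum_mul]
      have hzz : ∑ k ∈ Finset.univ.filter (fun k : ZMod r => k ≠ 0), chiC r k = 0 := by
        rw [sum_filter_ne_zero _ chiC_zero, chiC_sum hr2]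
      rw [hzz, zero_mul]
    · have hre : ∑ k ∈ Finset.univ.filter (fun k : ZMod r => k ≠ 0),
          chiC r (k * jz) * zmodExp r (k * c)
          = ∑ w ∈ Finset.univ.filter (fun w : ZMod r => w ≠ 0),
            chiC r (c⁻¹ * w * jz) * zmodExp r w := by
        refine Finset.sum_nbij' (fun k => c * k) (fun w => c⁻¹ * w) ?_ ?_ ?_ ?_ ?_
        · intro k hk
          rw [Finset.mem_filter] at hk ⊢
          exact ⟨Finset.mem_univ _, mul_ne_zero hc hk.2⟩
        · intro w hw
          rw [Finset.mem_filter] at hw ⊢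
          exact ⟨Finset.mem_univ _, mul_ne_zero (inv_ne_zero hc) hw.2⟩
        · intro k _
          show c⁻¹ * (c * k) = k
          rw [inv_mul_cancel_left₀ hc]
        · intro w _
          show c * (c⁻¹ * w) = w
          rw [mul_inv_cancel_left₀ hc]
        · intro k _
          show chiC r (k * jz) * zmodExp r (k * c)
            = chiC r (c⁻¹ * (c * k) * jz) * zmodExp r (c * k)
          rw [inv_mul_cancel_left₀ hc, mul_comm k c]
      rw [hre]
      have hterm : ∀ w : ZMod r, chiC r (c⁻¹ * w * jz) * zmodExp r w
          = (chiC r jz * chiC r c) * (chiC r w * zmodExp r w) := by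
        intro w
        rw [chiC_mul, chiC_mul, chiC_inv]
        ring
      rw [Finset.sum_congr rfl (fun w _ => hterm w), ← Finset.mul_sum, ← hG]
  -- expand sSum and swap the order of summation
  have hexpand : ∀ k : ZMod r, chiC r (k * jz) * sSum r u (iz * k) * zmodExp r (2 * k * jz)
      = ∑ jj ∈ Finset.range (r + 1), (-1 : ℂ) ^ jj *
          (chiC r (k * jz) * zmodExp r (k * (iz * Algebra.trace (ZMod r) F (u ^ jj) + 2 * jz))) := by
    intro k
    rw [sSum, Finset.mul_sum, Finset.sum_mul]
    refine Finset.sum_congr rfl fun jj _ => ?_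
    have he : k * (iz * Algebra.trace (ZMod r) F (u ^ jj) + 2 * jz)
        = iz * k * Algebra.trace (ZMod r) F (u ^ jj) + 2 * k * jz := by ring
    rw [he, zmodExp_add]
    ring
  calc ∑ k ∈ Finset.univ.filter (fun k : ZMod r => k ≠ 0),
        chiC r (k * jz) * sSum r u (iz * k) * zmodExp r (2 * k * jz)
      = ∑ k ∈ Finset.univ.filter (fun k : ZMod r => k ≠ 0),
          ∑ jj ∈ Finset.range (r + 1), (-1 : ℂ) ^ jj *
            (chiC r (k * jz) * zmodExp r (k * (iz * Algebra.trace (ZMod r) F (u ^ jj) + 2 * jz))) :=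
        Finset.sum_congr rfl fun k _ => hexpand k
    _ = ∑ jj ∈ Finset.range (r + 1), ∑ k ∈ Finset.univ.filter (fun k : ZMod r => k ≠ 0),
          (-1 : ℂ) ^ jj *
            (chiC r (k * jz) * zmodExp r (k * (iz * Algebra.trace (ZMod r) F (u ^ jj) + 2 * jz))) :=
        Finset.sum_comm
    _ = ∑ jj ∈ Finset.range (r + 1), (-1 : ℂ) ^ jj *
          (chiC r jz * chiC r (iz * Algebra.trace (ZMod r) F (u ^ jj) + 2 * jz) * G) := by
        refine Finset.sum_congr rfl fun jj _ => ?_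
        rw [← Finset.mul_sum, hkey]
    _ = chiC r jz * G * ∑ jj ∈ Finset.range (r + 1), (-1 : ℂ) ^ jj *
          chiC r (iz * Algebra.trace (ZMod r) F (u ^ jj) + 2 * jz) := by
        rw [Finset.mul_sum]
        refine Finset.sum_congr rfl fun jj _ => ?_
        ring
    _ = 0 := by rw [claim1, hT0, mul_zero]
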